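/- Let γ₁, γ₂ ∈ [0,1] with γ₁ ≠ γ₂. Then the relation ≤_{γ₁,γ₂} on Ĩ, defined by α ≤_{γ₁,γ₂} β iff K_{γ₁}(μ_α, 1 − ν_α) < K_{γ₁}(μ_β, 1 − ν_β), or K_{γ₁}(μ_α, 1 − ν_α) = K_{γ₁}(μ_β, 1 − ν_β) and K_{γ₂}(μ_α, 1 − ν_α) ≤ K_{γ₂}(μ_β, 1 − ν_β), is a linear order (reflexive, antisymmetric, transitive, and total) on Ĩ that refines Atanassov's partial order: α ⊂ β implies α ≤_{γ₁,γ₂} β. -/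
import Mathlib


/-- The set of intuitionistic fuzzy values (IFVs). -/
def Itilde : Set (ℝ × ℝ) :=
  {p | 0 ≤ p.1 ∧ p.1 ≤ 1 ∧ 0 ≤ p.2 ∧ p.2 ≤ 1 ∧ p.1 + p.2 ≤ 1}

/-- Atanassov's partial order on IFVs. -/
def atanassovLE (a b : ℝ × ℝ) : Prop := a.1 ≤ b.1 ∧ b.2 ≤ a.2

/-- The aggregation function `K_γ(x, y) = x + γ(y - x)`. -/
def Kgamma (g x y : ℝ) : ℝ := x + g * (y - x)

/-- The order `≤_{γ₁,γ₂}` on IFVs. -/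
def kLE (g₁ g₂ : ℝ) (a b : ℝ × ℝ) : Prop :=
  Kgamma g₁ a.1 (1 - a.2) < Kgamma g₁ b.1 (1 - b.2) ∨
    (Kgamma g₁ a.1 (1 - a.2) = Kgamma g₁ b.1 (1 - b.2) ∧
      Kgamma g₂ a.1 (1 - a.2) ≤ Kgamma g₂ b.1 (1 - b.2))

/-- For `γ₁, γ₂ ∈ [0,1]` with `γ₁ ≠ γ₂`, the relation `≤_{γ₁,γ₂}` is a linear
order on `Ĩ` (reflexive, antisymmetric, transitive, total) refining Atanassov's
partial order. -/
theorem kLE_isAdmissibleOrder (g₁ g₂ : ℝ)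
    (hg₁ : g₁ ∈ Set.Icc (0 : ℝ) 1) (hg₂ : g₂ ∈ Set.Icc (0 : ℝ) 1) (hne : g₁ ≠ g₂) :
    (∀ a ∈ Itilde, kLE g₁ g₂ a a) ∧
    (∀ a ∈ Itilde, ∀ b ∈ Itilde, kLE g₁ g₂ a b → kLE g₁ g₂ b a → a = b) ∧
    (∀ a ∈ Itilde, ∀ b ∈ Itilde, ∀ c ∈ Itilde,
      kLE g₁ g₂ a b → kLE g₁ g₂ b c → kLE g₁ g₂ a c) ∧
    (∀ a ∈ Itilde, ∀ b ∈ Itilde, kLE g₁ g₂ a b ∨ kLE g₁ g₂ b a) ∧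
    (∀ a ∈ Itilde, ∀ b ∈ Itilde, atanassovLE a b → kLE g₁ g₂ a b) := by
  obtain ⟨h10, h11⟩ := hg₁
  obtain ⟨h20, h21⟩ := hg₂
  refine ⟨?_, ?_, ?_, ?_, ?_⟩
  · intro a _
    exact Or.inr ⟨rfl, le_refl _⟩
  · intro a _ b _ hab hba
    rcases hab with h | ⟨h1, h2⟩
    · rcases hba with h' | ⟨h1', _⟩
      · linarith
      · linarith [h1'.symm ▸ h]
    · rcases hba with h' | ⟨h1', h2'⟩
      · exact absurd h1.symm (ne_of_lt h')
      · have hs : (1 - a.2 - a.1) = (1 - b.2 - b.1) := by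
          have e1 : a.1 + g₁ * (1 - a.2 - a.1) = b.1 + g₁ * (1 - b.2 - b.1) := by
            simpa [Kgamma] using h1
          have e2 : a.1 + g₂ * (1 - a.2 - a.1) = b.1 + g₂ * (1 - b.2 - b.1) := by
            have h2'' : Kgamma g₂ a.1 (1 - a.2) = Kgamma g₂ b.1 (1 - b.2) :=
              le_antisymm h2 h2'
            simpa [Kgamma] using h2''
          have hd : (g₁ - g₂) * ((1 - a.2 - a.1) - (1 - b.2 - b.1)) = 0 := by ring_nf; nlinarith [e1, e2]
          rcases mul_eq_zero.mp hd with h | h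
          · exact absurd (by linarith : g₁ = g₂) hne
          · linarith
        have hx : a.1 = b.1 := by
          have e1 : a.1 + g₁ * (1 - a.2 - a.1) = b.1 + g₁ * (1 - b.2 - b.1) := by
            simpa [Kgamma] using h1
          rw [hs] at e1; linarith
        have hy : a.2 = b.2 := by linarith
        exact Prod.ext hx hy
  · intro a _ b _ c _ hab hbc
    rcases hab with h | ⟨h1, h2⟩ <;> rcases hbc with h' | ⟨h1', h2'⟩
    · exact Or.inl (h.trans h')
    · exact Or.inl (h1' ▸ h)
    · exact Or.inl (h1 ▸ h')
    · exact Or.inr ⟨h1.trans h1', h2.trans h2'⟩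
  · intro a _ b _
    rcases lt_trichotomy (Kgamma g₁ a.1 (1 - a.2)) (Kgamma g₁ b.1 (1 - b.2)) with h | h | h
    · exact Or.inl (Or.inl h)
    · rcases le_total (Kgamma g₂ a.1 (1 - a.2)) (Kgamma g₂ b.1 (1 - b.2)) with h' | h'
      · exact Or.inl (Or.inr ⟨h, h'⟩)
      · exact Or.inr (Or.inr ⟨h.symm, h'⟩)
    · exact Or.inr (Or.inl h)
  · intro a _ b _ ⟨hμ, hν⟩
    have key : ∀ g, 0 ≤ g → g ≤ 1 →
        Kgamma g a.1 (1 - a.2) ≤ Kgamma g b.1 (1 - b.2) := by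
      intro g hg0 hg1
      simp only [Kgamma]
      nlinarith
    rcases lt_or_eq_of_le (key g₁ h10 h11) with h | h
    · exact Or.inl h
    · exact Or.inr ⟨h, key g₂ h20 h21⟩
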